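/- Every connected bisplit graph has diameter at most 4. -/

import Mathlib

/-- The line generated by `a` and `b` in the shortest-path metric of `G`:
`{a, b}` together with all vertices collinear with `a` and `b`. -/
def graphLine {V : Type*} (G : SimpleGraph V) (a b : V) : Set V :=
  {a, b} ∪ {c | G.dist a c + G.dist c b = G.dist a b ∨
                G.dist c a + G.dist a b = G.dist c b ∨
                G.dist a b + G.dist b c = G.dist a c}

theorem bisplit_diameter_le_four {V : Type*} (G : SimpleGraph V)
    (hconn : G.Connected) (X Y Z : Set V)
    (hcover : X ∪ Y ∪ Z = Set.univ)
    (hXY : Disjoint X Y) (hXZ : Disjoint X Z) (hYZ : Disjoint Y Z)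
    (hYne : Y.Nonempty) (hZne : Z.Nonempty)
    (hXstable : ∀ u ∈ X, ∀ v ∈ X, ¬ G.Adj u v)
    (hYstable : ∀ u ∈ Y, ∀ v ∈ Y, ¬ G.Adj u v)
    (hZstable : ∀ u ∈ Z, ∀ v ∈ Z, ¬ G.Adj u v)
    (hcomplete : ∀ y ∈ Y, ∀ z ∈ Z, G.Adj y z)
    (hXdeg : ∀ x ∈ X, ∃ w, G.Adj x w) :
    ∀ u v : V, G.dist u v ≤ 4 := by
  obtain ⟨y₀, hy₀⟩ := hYne
  obtain ⟨z₀, hz₀⟩ := hZne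
  -- any two vertices of Y ∪ Z are at distance ≤ 2
  have hYZdist : ∀ p ∈ Y ∪ Z, ∀ q ∈ Y ∪ Z, G.dist p q ≤ 2 := by
    rintro p (hp | hp) q (hq | hq)
    · exact (G.dist_le ((hcomplete p hp z₀ hz₀).toWalk.append
        ((hcomplete q hq z₀ hz₀).symm.toWalk)))
    · exact le_trans (G.dist_le (hcomplete p hp q hq).toWalk) (by norm_num)
    · exact le_trans (G.dist_le (hcomplete q hq p hp).symm.toWalk) (by norm_num)
    · exact (G.dist_le ((hcomplete y₀ hy₀ p hp).symm.toWalk.append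
        ((hcomplete y₀ hy₀ q hq).toWalk)))
  -- every vertex has a "projection" in Y ∪ Z at distance ≤ 1
  have hproj : ∀ u : V, ∃ p ∈ Y ∪ Z, G.dist u p ≤ 1 := by
    intro u
    have hu : u ∈ X ∪ Y ∪ Z := hcover ▸ Set.mem_univ u
    rcases hu with (hu | hu) | hu
    · obtain ⟨w, hw⟩ := hXdeg u hu
      have hwYZ : w ∈ Y ∪ Z := by
        have : w ∈ X ∪ Y ∪ Z := hcover ▸ Set.mem_univ w
        rcases this with (hwX | h) | h
        · exact absurd hw (hXstable u hu w hwX)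
        · exact Or.inl h
        · exact Or.inr h
      exact ⟨w, hwYZ, G.dist_le hw.toWalk⟩
    · exact ⟨u, Or.inl hu, by rw [SimpleGraph.dist_self]; omega⟩
    · exact ⟨u, Or.inr hu, by rw [SimpleGraph.dist_self]; omega⟩
  intro u v
  obtain ⟨p, hp, hup⟩ := hproj u
  obtain ⟨q, hq, hvq⟩ := hproj v
  calc G.dist u v ≤ G.dist u p + G.dist p v := hconn.dist_triangle
    _ ≤ G.dist u p + (G.dist p q + G.dist q v) := by
        exact add_le_add_right hconn.dist_triangle _
    _ ≤ 1 + (2 + 1) := by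
        have := hYZdist p hp q hq
        have h4 : G.dist q v = G.dist v q := G.dist_comm ..
        omega
    _ = 4 := by norm_num
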